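/- Let h₁, h₂ ∈ ℤ² be primitive vectors. Consider two ℤ²-periodic families of curves in ℝ² projecting to simple closed curves on the torus T² = ℝ²/ℤ² in the homology classes h₁ and h₂, such that any two of their lifts intersect at most once. Then the traces on T² of the two closed curves intersect in exactly |h₁·h₂| points, where h₁·h₂ = det(h₁,h₂) is the homological intersection number. -/

import Mathlib

open Filter Topology

/-- Projection from the plane to the torus `T² = (ℝ/ℤ) × (ℝ/ℤ)`. -/
noncomputable def torusProj (x : ℝ × ℝ) : AddCircle (1 : ℝ) × AddCircle (1 : ℝ) :=
  ((x.1 : AddCircle (1 : ℝ)), (x.2 : AddCircle (1 : ℝ)))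

/-- Cast an integer vector to a real vector. -/
def intVec (v : ℤ × ℤ) : ℝ × ℝ := ((v.1 : ℝ), (v.2 : ℝ))


open Complex Set

noncomputable section

def clampI (t : ℝ) : ℝ := min (max t 0) 1

lemma clampI_mem (t : ℝ) : clampI t ∈ Icc (0:ℝ) 1 :=
  ⟨le_min (le_max_right _ _) zero_le_one, min_le_right _ _⟩

lemma clampI_of_mem {t : ℝ} (h : t ∈ Icc (0:ℝ) 1) : clampI t = t := by
  simp only [clampI, max_eq_left h.1, min_eq_left h.2]

lemma clampI_lip (s t : ℝ) : |clampI s - clampI t| ≤ |s - t| := by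
  have h1 := abs_min_sub_min_le_max (max s 0) 1 (max t 0) 1
  have h2 : max |max s 0 - max t 0| |(1:ℝ)-1| = |max s 0 - max t 0| := by
    rw [sub_self, abs_zero]; exact max_eq_left (abs_nonneg _)
  rw [h2] at h1
  exact h1.trans (abs_max_sub_max_le_abs s t 0)

lemma continuous_clampI : Continuous clampI :=
  (continuous_id.max continuous_const).min continuous_const

lemma ball_slit {z : ℂ} (h : ‖z - 1‖ < 1) : z ∈ Complex.slitPlane := by
  rw [Complex.mem_slitPlane_iff]
  left
  have h1 : |(z - 1).re| ≤ ‖z - 1‖ := Complex.abs_re_le_norm _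
  have h2 : (z - 1).re = z.re - 1 := by simp
  rw [h2] at h1
  have := abs_lt.mp (lt_of_le_of_lt h1 h)
  linarith [this.1]

lemma ball_ne_zero {z : ℂ} (h : ‖z - 1‖ < 1) : z ≠ 0 := by
  intro e; rw [e] at h; simp at h

/-- Existence of a continuous logarithm lift on `[0,1]`. -/
lemma exists_lift (f : ℝ → ℂ) (hf : Continuous f) (h0 : ∀ t, f t ≠ 0) :
    ∃ ρ : ℝ → ℂ, Continuous ρ ∧ ∀ t ∈ Icc (0:ℝ) 1, Complex.exp (ρ t) = f t := by
  set g : ℝ → ℂ := fun t => f (clampI t) with hg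
  have hgc : Continuous g := hf.comp continuous_clampI
  have hgne : ∀ t, g t ≠ 0 := fun t => h0 _
  obtain ⟨t₀, ht₀, hmin'⟩ := (isCompact_Icc (a:=(0:ℝ)) (b:=1)).exists_isMinOn
    ⟨0, by norm_num⟩ ((continuous_norm.comp hf).continuousOn)
  have hmin : ∀ t ∈ Icc (0:ℝ) 1, ‖f t₀‖ ≤ ‖f t‖ := by
    intro t ht; exact hmin' ht
  set m := ‖f t₀‖ with hm_def
  have hm : 0 < m := by
    have := h0 t₀
    simpa [hm_def, norm_pos_iff] using this
  have hgm : ∀ t, m ≤ ‖g t‖ := fun t => hmin _ (clampI_mem t)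
  have huc := (isCompact_Icc (a:=(0:ℝ)) (b:=1)).uniformContinuousOn_of_continuous hf.continuousOn
  rw [Metric.uniformContinuousOn_iff] at huc
  obtain ⟨δ, hδ, hδ'⟩ := huc m hm
  have hgu : ∀ s t : ℝ, |s - t| < δ → ‖g s - g t‖ < m := by
    intro s t h
    have hd : dist (clampI s) (clampI t) < δ := by
      rw [Real.dist_eq]; exact lt_of_le_of_lt (clampI_lip s t) h
    have := hδ' _ (clampI_mem s) _ (clampI_mem t) hd
    rwa [Complex.dist_eq] at this
  obtain ⟨n, hn⟩ := exists_nat_gt (1/δ)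
  have hnpos : 0 < (n:ℝ) := lt_trans (by positivity) hn
  have hinv : 1/(n:ℝ) < δ := by
    rw [div_lt_iff₀ hnpos]
    rw [div_lt_iff₀ hδ] at hn
    nlinarith
  have key : ∀ k : ℕ, ∃ ρ : ℝ → ℂ, Continuous ρ ∧
      ∀ t ∈ Icc (0:ℝ) ((k:ℝ)/n), Complex.exp (ρ t) = g t := by
    intro k
    induction k with
    | zero =>
      refine ⟨fun _ => Complex.log (g 0), continuous_const, ?_⟩
      intro t ht
      simp only [Nat.cast_zero, zero_div] at ht
      have : t = 0 := le_antisymm ht.2 ht.1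
      rw [this, Complex.exp_log (hgne 0)]
    | succ k ih =>
      obtain ⟨ρ, hρc, hρ⟩ := ih
      set a : ℝ := (k:ℝ)/n with ha_def
      set b : ℝ := ((k:ℝ)+1)/n with hb_def
      have hcast : ((k+1:ℕ):ℝ)/n = b := by push_cast; rw [hb_def]
      have hab : a ≤ b := by
        rw [ha_def, hb_def]; gcongr; linarith
      have hapos : 0 ≤ a := by positivity
      have hba : b - a = 1/n := by rw [ha_def, hb_def]; ring
      set cl : ℝ → ℝ := fun t => max a (min t b) with hcl_def
      have hclc : Continuous cl := continuous_const.max (continuous_id.min continuous_const)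
      have hcl_mem : ∀ t, cl t ∈ Icc a b := fun t =>
        ⟨le_max_left _ _, max_le hab (min_le_right _ _)⟩
      have hcl_close : ∀ t, |cl t - a| < δ := by
        intro t
        have h1 := hcl_mem t
        have : |cl t - a| ≤ 1/n := by
          rw [abs_le]; constructor <;> [linarith [h1.1]; linarith [h1.2, hba.le, h1.2.trans_eq (by linarith [hba] : b = a + 1/n)]]
        exact lt_of_le_of_lt this hinv
      set r : ℝ → ℂ := fun t => g (cl t) / g a with hr_def
      have hrb : ∀ t, ‖r t - 1‖ < 1 := by
        intro t
        have hga : g a ≠ 0 := hgne a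
        have : r t - 1 = (g (cl t) - g a) / g a := by
          rw [hr_def]; field_simp
        rw [this, norm_div]
        rw [div_lt_one (by simpa [norm_pos_iff] using hga : 0 < ‖g a‖)]
        exact lt_of_lt_of_le (hgu _ _ (hcl_close t)) (hgm a)
      have hrc : Continuous r := (hgc.comp hclc).div_const _
      have hlogc : Continuous fun t => Complex.log (r t) := by
        rw [continuous_iff_continuousAt]
        intro t
        exact (continuousAt_clog (ball_slit (hrb t))).comp hrc.continuousAt
      have hra : r a = 1 := by
        have : cl a = a := by
          rw [hcl_def]; simp only []; rw [min_eq_left hab, max_eq_right (le_refl a)]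
        rw [hr_def]; simp only [this]; exact div_self (hgne a)
      refine ⟨fun t => if t ≤ a then ρ t else ρ a + Complex.log (r t), ?_, ?_⟩
      · apply Continuous.if_le hρc (continuous_const.add hlogc) continuous_id continuous_const
        intro t ht
        simp only [id_eq] at ht
        rw [ht]; simp only [Pi.add_apply, hra, Complex.log_one, add_zero]
      · intro t ht
        rw [hcast] at ht
        by_cases hta : t ≤ a
        · simp only [if_pos hta]
          exact hρ t ⟨ht.1, hta⟩
        · simp only [if_neg hta]
          have hta' : a ≤ t := le_of_not_ge hta
          have hclt : cl t = t := by
            rw [hcl_def]; simp only []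
            rw [min_eq_left ht.2, max_eq_right hta']
          have hexp_a : Complex.exp (ρ a) = g a := hρ a ⟨hapos, le_refl a⟩
          rw [Complex.exp_add, hexp_a, Complex.exp_log (by rw [hr_def]; exact div_ne_zero (hgne _) (hgne a))]
          rw [hr_def]; simp only [hclt]
          rw [mul_div_assoc']
          exact mul_div_cancel_left₀ _ (hgne a)
  obtain ⟨ρ, hρc, hρ⟩ := key n
  refine ⟨ρ, hρc, ?_⟩
  intro t ht
  have hn1 : (n:ℝ)/n = 1 := div_self (ne_of_gt hnpos)
  rw [hn1] at hρ
  rw [hρ t ht, hg]; simp only []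
  rw [clampI_of_mem ht]

/-- Winding number of a loop `f` (restricted to `[0,1]`) around `0`. -/
def Winding (f : ℝ → ℂ) (k : ℤ) : Prop :=
  ∃ ρ : ℝ → ℂ, Continuous ρ ∧ (∀ t ∈ Icc (0:ℝ) 1, Complex.exp (ρ t) = f t) ∧
    ρ 1 - ρ 0 = k * (2 * Real.pi * Complex.I)

lemma winding_exists (f : ℝ → ℂ) (hf : Continuous f) (h0 : ∀ t, f t ≠ 0) (hl : f 1 = f 0) :
    ∃ k : ℤ, Winding f k := by
  obtain ⟨ρ, hρc, hρ⟩ := exists_lift f hf h0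
  have h1 : Complex.exp (ρ 1) = Complex.exp (ρ 0) := by
    rw [hρ 1 (by norm_num), hρ 0 (by norm_num), hl]
  rw [Complex.exp_eq_exp_iff_exists_int] at h1
  obtain ⟨k, hk⟩ := h1
  exact ⟨k, ρ, hρc, hρ, by rw [hk]; push_cast; ring⟩

lemma winding_unique {f g : ℝ → ℂ} {k l : ℤ} (hfg : ∀ t ∈ Icc (0:ℝ) 1, f t = g t)
    (hk : Winding f k) (hl : Winding g l) : k = l := by
  obtain ⟨ρ, hρc, hρ, hρd⟩ := hk
  obtain ⟨σ, hσc, hσ, hσd⟩ := hl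
  set u : ℝ → ℝ := fun t => (ρ t - σ t).im with hu
  have key : ∀ t ∈ Icc (0:ℝ) 1, ∃ n : ℤ, u t = n * (2 * Real.pi) := by
    intro t ht
    have hgne : g t ≠ 0 := by
      intro e
      have := hσ t ht
      rw [e] at this
      exact Complex.exp_ne_zero _ this
    have h1 : Complex.exp (ρ t - σ t) = 1 := by
      rw [Complex.exp_sub, hρ t ht, hσ t ht, hfg t ht, div_self hgne]
    rw [Complex.exp_eq_one_iff] at h1
    obtain ⟨n, hn⟩ := h1
    refine ⟨n, ?_⟩
    rw [hu]; simp only []; rw [hn]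
    have : ((n:ℂ) * (2 * Real.pi * Complex.I)) = Complex.I * ((2*Real.pi*n : ℝ):ℂ) := by
      push_cast; ring
    rw [this, Complex.I_mul_im]
    simp; ring
  have huc : Continuous u := Complex.continuous_im.comp (hρc.sub hσc)
  have hA : IsPreconnected (u '' Icc 0 1) :=
    (isPreconnected_Icc).image u huc.continuousOn
  have hsub : ∀ x ∈ u '' Icc (0:ℝ) 1, ∃ n : ℤ, x = n * (2*Real.pi) := by
    rintro x ⟨t, ht, rfl⟩; exact key t ht
  have hmem0 : u 0 ∈ u '' Icc (0:ℝ) 1 := ⟨0, by norm_num, rfl⟩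
  have hmem1 : u 1 ∈ u '' Icc (0:ℝ) 1 := ⟨1, by norm_num, rfl⟩
  have main : ∀ x y : ℝ, x ∈ u '' Icc (0:ℝ) 1 → y ∈ u '' Icc (0:ℝ) 1 → ¬ x < y := by
    intro x y hx hy hxy
    obtain ⟨n₁, rfl⟩ := hsub x hx
    obtain ⟨n₂, rfl⟩ := hsub y hy
    have hπ := Real.pi_pos
    have hn12 : (n₁:ℝ) < n₂ := by nlinarith
    have hn12' : n₁ < n₂ := by exact_mod_cast hn12
    have hn12'' : (n₁:ℝ) + 1 ≤ n₂ := by exact_mod_cast hn12'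
    have hz : (n₁ * (2*Real.pi) + Real.pi) ∈ u '' Icc (0:ℝ) 1 := by
      apply hA.ordConnected.out hx hy
      constructor
      · linarith
      · nlinarith
    obtain ⟨n₃, hn₃⟩ := hsub _ hz
    have hcast : ((2*(n₃ - n₁) : ℤ) : ℝ) = 1 := by push_cast; nlinarith
    have : (2*(n₃ - n₁) : ℤ) = 1 := by exact_mod_cast hcast
    omega
  have h01 : u 1 = u 0 := by
    rcases lt_trichotomy (u 1) (u 0) with h | h | h
    · exact absurd h (main _ _ hmem1 hmem0)
    · exact h
    · exact absurd h (main _ _ hmem0 hmem1)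
  -- conclude
  have him : ((k:ℂ) * (2 * Real.pi * Complex.I)).im - ((l:ℂ) * (2 * Real.pi * Complex.I)).im = 0 := by
    rw [← hρd, ← hσd]
    have : (ρ 1 - ρ 0).im - (σ 1 - σ 0).im = u 1 - u 0 := by
      rw [hu]; simp [Complex.sub_im]; ring
    rw [this, h01, sub_self]
  have hkim : ∀ j : ℤ, ((j:ℂ) * (2 * Real.pi * Complex.I)).im = j * (2*Real.pi) := by
    intro j
    have : ((j:ℂ) * (2 * Real.pi * Complex.I)) = Complex.I * ((2*Real.pi*j : ℝ):ℂ) := by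
      push_cast; ring
    rw [this, Complex.I_mul_im]; simp; ring
  rw [hkim k, hkim l] at him
  have hπ := Real.pi_pos
  have : (k:ℝ) = l := by nlinarith
  exact_mod_cast this

lemma winding_mul {f g : ℝ → ℂ} {k l : ℤ} (hf : Winding f k) (hg : Winding g l) :
    Winding (fun t => f t * g t) (k + l) := by
  obtain ⟨ρ, hρc, hρ, hρd⟩ := hf
  obtain ⟨σ, hσc, hσ, hσd⟩ := hg
  refine ⟨fun t => ρ t + σ t, hρc.add hσc, ?_, ?_⟩
  · intro t ht
    rw [Complex.exp_add, hρ t ht, hσ t ht]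
  · have : ρ 1 + σ 1 - (ρ 0 + σ 0) = (ρ 1 - ρ 0) + (σ 1 - σ 0) := by ring
    rw [this, hρd, hσd]; push_cast; ring

lemma winding_zero_of_ball {f : ℝ → ℂ} (hf : Continuous f)
    (hball : ∀ t ∈ Icc (0:ℝ) 1, ‖f t - 1‖ < 1) (hl : f 1 = f 0) : Winding f 0 := by
  refine ⟨fun t => Complex.log (f (clampI t)), ?_, ?_, ?_⟩
  · rw [continuous_iff_continuousAt]
    intro t
    have h1 : ContinuousAt (fun s => f (clampI s)) t :=
      hf.continuousAt.comp continuous_clampI.continuousAt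
    have h2 : ContinuousAt Complex.log (f (clampI t)) :=
      continuousAt_clog (ball_slit (hball _ (clampI_mem t)))
    exact ContinuousAt.comp (g := Complex.log) (f := fun s => f (clampI s)) h2 h1
  · intro t ht
    show Complex.exp (Complex.log (f (clampI t))) = f t
    rw [clampI_of_mem ht]
    exact Complex.exp_log (ball_ne_zero (hball t ht))
  · show Complex.log (f (clampI 1)) - Complex.log (f (clampI 0)) = _
    have h1 : clampI 1 = 1 := clampI_of_mem (by norm_num)
    have h0 : clampI 0 = 0 := clampI_of_mem (by norm_num)
    rw [h1, h0, hl]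
    simp

lemma winding_const (c : ℂ) (hc : c ≠ 0) : Winding (fun _ => c) 0 :=
  ⟨fun _ => Complex.log c, continuous_const, fun t _ => Complex.exp_log hc, by simp⟩

lemma winding_eq_of_close {f h : ℝ → ℂ} {k l : ℤ} (hfc : Continuous f) (hhc : Continuous h)
    (hfl : f 1 = f 0) (hhl : h 1 = h 0)
    (hcl : ∀ t ∈ Icc (0:ℝ) 1, ‖f t - h t‖ < ‖h t‖)
    (hk : Winding f k) (hl : Winding h l) : k = l := by
  have hne : ∀ t ∈ Icc (0:ℝ) 1, h t ≠ 0 := by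
    intro t ht e
    have := hcl t ht
    rw [e] at this
    simp only [norm_zero, sub_zero] at this
    exact absurd this (not_lt.mpr (norm_nonneg _))
  set q : ℝ → ℂ := fun t => f (clampI t) / h (clampI t) with hq
  have hqball : ∀ t ∈ Icc (0:ℝ) 1, ‖q t - 1‖ < 1 := by
    intro t ht
    have hmem := clampI_mem t
    have hne' := hne _ hmem
    have : q t - 1 = (f (clampI t) - h (clampI t)) / h (clampI t) := by
      rw [hq]; field_simp
    rw [this, norm_div, div_lt_one (by simpa [norm_pos_iff] using hne')]
    exact hcl _ hmem
  have hqc : Continuous q :=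
    (hfc.comp continuous_clampI).div (hhc.comp continuous_clampI)
      (fun t => hne _ (clampI_mem t))
  have hq0 : Winding q 0 := by
    apply winding_zero_of_ball hqc hqball
    rw [hq]; simp only []
    rw [clampI_of_mem (by norm_num : (1:ℝ) ∈ Icc (0:ℝ) 1),
        clampI_of_mem (by norm_num : (0:ℝ) ∈ Icc (0:ℝ) 1), hfl, hhl]
  have hmul : Winding (fun t => h t * q t) l := by
    have := winding_mul hl hq0
    simpa using this
  refine winding_unique (f:=f) (g:=fun t => h t * q t) ?_ hk hmul
  intro t ht
  rw [hq]; simp only []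
  rw [clampI_of_mem ht, mul_div_assoc']
  exact (mul_div_cancel_left₀ _ (hne t ht)).symm

lemma winding_circle (R : ℝ) (hR : 0 < R) :
    Winding (fun t => (R:ℂ) * Complex.exp (2 * Real.pi * Complex.I * (t:ℂ))) 1 := by
  refine ⟨fun t => ((Real.log R : ℝ):ℂ) + 2 * Real.pi * Complex.I * (t:ℂ), ?_, ?_, ?_⟩
  · apply continuous_const.add
    exact continuous_const.mul Complex.continuous_ofReal
  · intro t _
    rw [Complex.exp_add, ← Complex.ofReal_exp, Real.exp_log hR]
  · push_cast; ring

/-- A bounded continuous perturbation of the identity on `ℂ` is surjective. -/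
lemma surj_of_bounded (Q : ℂ → ℂ) (hQ : Continuous Q) (C : ℝ) (hC0 : 0 ≤ C)
    (hC : ∀ z, ‖Q z‖ ≤ C) :
    Function.Surjective (fun z => z + Q z) := by
  intro v
  by_contra hv
  push_neg at hv
  set G : ℂ → ℂ := fun z => z + Q z - v with hG
  have hGne : ∀ z, G z ≠ 0 := fun z => sub_ne_zero.mpr (hv z)
  have hGc : Continuous G := (continuous_id.add hQ).sub continuous_const
  set R : ℝ := C + ‖v‖ + 1 with hR_def
  have hR : 0 < R := by positivity
  set e : ℝ → ℂ := fun t => Complex.exp (2 * Real.pi * Complex.I * (t:ℂ)) with he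
  have hec : Continuous e := Complex.continuous_exp.comp (continuous_const.mul Complex.continuous_ofReal)
  have habse : ∀ t : ℝ, ‖e t‖ = 1 := by
    intro t
    rw [he]; simp only []
    rw [Complex.norm_exp]
    have : (2 * Real.pi * Complex.I * (t:ℂ)).re = 0 := by
      simp [Complex.mul_re, Complex.mul_im]
    rw [this, Real.exp_zero]
  have hel : e 1 = e 0 := by
    rw [he]; simp only [Complex.ofReal_one, Complex.ofReal_zero, mul_one, mul_zero,
      Complex.exp_zero]
    exact Complex.exp_two_pi_mul_I
  set F : ℝ → ℝ → ℂ := fun r t => G ((r:ℂ) * e t) with hF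
  have hFc : ∀ r, Continuous (F r) := fun r => hGc.comp (continuous_const.mul hec)
  have hFl : ∀ r, F r 1 = F r 0 := fun r => by rw [hF]; simp only []; rw [hel]
  have hex : ∀ r : ℝ, ∃ k, Winding (F r) k := fun r =>
    winding_exists _ (hFc r) (fun t => hGne _) (hFl r)
  choose W hW using hex
  -- winding at radius R is 1
  have hWR : W R = 1 := by
    refine winding_eq_of_close (h := fun t => (R:ℂ) * e t) (hFc R) (continuous_const.mul hec) (hFl R)
      (by rw [hel]) ?_ (hW R) (winding_circle R hR)
    intro t _
    have h1 : F R t - (R:ℂ) * e t = Q ((R:ℂ) * e t) - v := by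
      rw [hF, hG]; ring
    have h2 : ‖(R:ℂ) * e t‖ = R := by
      rw [norm_mul, habse, mul_one, Complex.norm_real, Real.norm_eq_abs, _root_.abs_of_pos hR]
    rw [h1, h2]
    calc ‖Q ((R:ℂ) * e t) - v‖ ≤ ‖Q _‖ + ‖v‖ := by
          exact (norm_sub_le _ _)
      _ ≤ C + ‖v‖ := by linarith [hC ((R:ℂ) * e t)]
      _ < R := by rw [hR_def]; linarith
  -- winding at radius 0 is 0
  have hW0 : W 0 = 0 := by
    refine winding_unique (g := fun _ => G 0) ?_ (hW 0) (winding_const (G 0) (hGne 0))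
    intro t _
    rw [hF]; simp only []
    norm_num
  -- local constancy
  obtain ⟨z₀, hz₀, hmin'⟩ := (isCompact_closedBall (0:ℂ) R).exists_isMinOn
    ⟨0, by simp [hR.le]⟩ ((continuous_norm.comp hGc).continuousOn)
  set m := ‖G z₀‖ with hm_def
  have hm : 0 < m := by simpa [hm_def, norm_pos_iff] using hGne z₀
  have hmin : ∀ z ∈ Metric.closedBall (0:ℂ) R, m ≤ ‖G z‖ := fun z hz => hmin' hz
  have huc := (isCompact_closedBall (0:ℂ) R).uniformContinuousOn_of_continuous hGc.continuousOn
  rw [Metric.uniformContinuousOn_iff] at huc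
  obtain ⟨δ, hδ, hδ'⟩ := huc m hm
  have hmemball : ∀ r : ℝ, r ∈ Icc (0:ℝ) R → ∀ t : ℝ, (r:ℂ) * e t ∈ Metric.closedBall (0:ℂ) R := by
    intro r hr t
    rw [Metric.mem_closedBall, dist_zero_right]
    show ‖_‖ ≤ R
    rw [norm_mul, habse, mul_one, Complex.norm_real, Real.norm_eq_abs, _root_.abs_of_nonneg hr.1]
    exact hr.2
  have step : ∀ r r' : ℝ, r ∈ Icc (0:ℝ) R → r' ∈ Icc (0:ℝ) R → |r - r'| < δ → W r = W r' := by
    intro r r' hr hr' hd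
    refine winding_eq_of_close (hFc r) (hFc r') (hFl r) (hFl r') ?_ (hW r) (hW r')
    intro t _
    have hdist : dist ((r:ℂ) * e t) ((r':ℂ) * e t) < δ := by
      rw [Complex.dist_eq, ← sub_mul, norm_mul, habse, mul_one]
      rw [← Complex.ofReal_sub, Complex.norm_real, Real.norm_eq_abs]
      exact hd
    have h1 := hδ' _ (hmemball r hr t) _ (hmemball r' hr' t) hdist
    rw [Complex.dist_eq] at h1
    calc ‖F r t - F r' t‖ < m := h1
      _ ≤ ‖F r' t‖ := hmin _ (hmemball r' hr' t)
  have hδ2 : 0 < δ/2 := by linarith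
  have chain : ∀ j : ℕ, ∀ r ∈ Icc (0:ℝ) R, r ≤ j * (δ/2) → W r = W 0 := by
    intro j
    induction j with
    | zero =>
      intro r hr hle
      have : r = 0 := le_antisymm (by simpa using hle) hr.1
      rw [this]
    | succ j ih =>
      intro r hr hle
      set r' := max (r - δ/2) 0 with hr'_def
      have hr'mem : r' ∈ Icc (0:ℝ) R := ⟨le_max_right _ _, max_le (by linarith [hr.2]) hR.le⟩
      have hr'le : r' ≤ r := max_le (by linarith) hr.1
      have hr'ge : r - δ/2 ≤ r' := le_max_left _ _
      have h1 : |r - r'| < δ := by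
        rw [_root_.abs_of_nonneg (by linarith)]
        linarith
      have h2 : r' ≤ j * (δ/2) := by
        apply max_le
        · push_cast at hle ⊢; linarith
        · positivity
      rw [step r r' hr hr'mem h1]
      exact ih r' hr'mem h2
  obtain ⟨j, hj⟩ := exists_nat_ge (R / (δ/2))
  have hjR : R ≤ j * (δ/2) := by
    rw [div_le_iff₀ hδ2] at hj
    linarith
  have := chain j R ⟨hR.le, le_refl R⟩ hjR
  rw [hWR, hW0] at this
  exact one_ne_zero this

section helpers

open Complex Set

lemma addcircle_coe_add_int (a : ℝ) (k : ℤ) : ((a + k : ℝ) : AddCircle (1:ℝ)) = a := by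
  have h2 : ((k:ℝ) : AddCircle (1:ℝ)) = 0 := by
    rw [AddCircle.coe_eq_zero_iff]; exact ⟨k, by simp⟩
  rw [AddCircle.coe_add, h2, add_zero]

lemma addcircle_coe_eq (a b : ℝ) (H : (a : AddCircle (1:ℝ)) = (b : AddCircle (1:ℝ))) :
    ∃ k : ℤ, a = b + k := by
  have h : ((a - b : ℝ) : AddCircle (1:ℝ)) = 0 := by
    rw [AddCircle.coe_sub, H, sub_self]
  rw [AddCircle.coe_eq_zero_iff] at h
  obtain ⟨k, hk⟩ := h
  refine ⟨k, ?_⟩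
  have : (k:ℝ) * 1 = a - b := by rw [← hk]; simp [zsmul_eq_mul]
  linarith

lemma torusProj_add_intVec (x : ℝ × ℝ) (v : ℤ × ℤ) : torusProj (x + intVec v) = torusProj x := by
  unfold torusProj intVec
  refine Prod.ext ?_ ?_
  · show (((x + ((v.1:ℝ), (v.2:ℝ))).1 : ℝ) : AddCircle (1:ℝ)) = _
    rw [Prod.fst_add]
    exact addcircle_coe_add_int x.1 v.1
  · show (((x + ((v.1:ℝ), (v.2:ℝ))).2 : ℝ) : AddCircle (1:ℝ)) = _
    rw [Prod.snd_add]
    exact addcircle_coe_add_int x.2 v.2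

lemma torusProj_eq_iff {x y : ℝ × ℝ} : torusProj x = torusProj y ↔ ∃ v : ℤ × ℤ, x = y + intVec v := by
  constructor
  · intro H
    rw [Prod.ext_iff] at H
    obtain ⟨k₁, hk₁⟩ := addcircle_coe_eq x.1 y.1 H.1
    obtain ⟨k₂, hk₂⟩ := addcircle_coe_eq x.2 y.2 H.2
    exact ⟨(k₁, k₂), Prod.ext hk₁ hk₂⟩
  · rintro ⟨v, rfl⟩
    exact torusProj_add_intVec y v

lemma per_int (γ : ℝ → ℝ × ℝ) (h : ℤ × ℤ) (hper : ∀ t, γ (t + 1) = γ t + intVec h) :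
    ∀ (m : ℤ) (t : ℝ), γ (t + m) = γ t + intVec (m * h.1, m * h.2) := by
  have hadd : ∀ (a b : ℤ × ℤ), intVec a + intVec b = intVec (a.1 + b.1, a.2 + b.2) := by
    intro a b
    simp [intVec, Prod.ext_iff]
  intro m
  induction m using Int.induction_on with
  | zero => intro t; simp [intVec]
  | succ k ih =>
    intro t
    have harg : t + (((k:ℤ) + 1 : ℤ) : ℝ) = t + (((k:ℤ)):ℝ) + 1 := by push_cast; ring
    rw [harg, hper, ih t, add_assoc, hadd]
    congr 1
    simp only [intVec, Prod.ext_iff]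
    constructor <;> (push_cast; ring_nf) <;> simp [mul_comm]
  | pred k ih =>
    intro t
    have harg : t + ((-(k:ℤ) - 1 : ℤ):ℝ) + 1 = t + ((-(k:ℤ) : ℤ):ℝ) := by push_cast; ring
    have h2 := hper (t + ((-(k:ℤ) - 1 : ℤ):ℝ))
    rw [harg, ih t] at h2
    have h3 : γ (t + ((-(k:ℤ) - 1 : ℤ):ℝ)) =
        γ t + intVec (-(k:ℤ) * h.1, -(k:ℤ) * h.2) - intVec h := eq_sub_of_add_eq h2.symm
    rw [h3, sub_eq_iff_eq_add, add_assoc, hadd]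
    congr 1
    simp only [intVec, Prod.ext_iff]
    constructor <;> (push_cast; ring_nf) <;> simp [mul_comm]

end helpers


section meet

open Complex Set

lemma exists_meet (h₁ h₂ : ℤ × ℤ)
    (hint : h₁.1 * h₂.2 - h₁.2 * h₂.1 ≠ 0)
    (γ₁ γ₂ : ℝ → ℝ × ℝ)
    (hc₁ : Continuous γ₁) (hc₂ : Continuous γ₂)
    (hper₁ : ∀ t, γ₁ (t + 1) = γ₁ t + intVec h₁)
    (hper₂ : ∀ t, γ₂ (t + 1) = γ₂ t + intVec h₂) :
    ∀ v : ℤ × ℤ, ∃ s t : ℝ, γ₁ s = γ₂ t + intVec v := by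
  intro v
  set d : ℤ := h₁.1 * h₂.2 - h₁.2 * h₂.1 with hd_def
  have hdR : (d:ℝ) ≠ 0 := Int.cast_ne_zero.mpr hint
  set K : ℝ × ℝ → ℂ := fun p => (p.1 : ℂ) + (p.2 : ℂ) * Complex.I with hK_def
  have hKinj : Function.Injective K := by
    intro p q hpq
    rw [hK_def] at hpq
    simp only [] at hpq
    have h1 := congrArg Complex.re hpq
    have h2 := congrArg Complex.im hpq
    simp [Complex.add_re, Complex.add_im, Complex.mul_re, Complex.mul_im] at h1 h2
    exact Prod.ext h1 h2
  have hKadd : ∀ p q, K (p + q) = K p + K q := by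
    intro p q
    rw [hK_def]; simp only [Prod.fst_add, Prod.snd_add]
    push_cast; ring
  have hKabs : ∀ p, ‖K p‖ ≤ |p.1| + |p.2| := by
    intro p
    rw [hK_def]; simp only []
    calc ‖(p.1:ℂ) + (p.2:ℂ) * Complex.I‖
        ≤ ‖(p.1:ℂ)‖ + ‖(p.2:ℂ) * Complex.I‖ := norm_add_le _ _
      _ = |p.1| + |p.2| := by
          rw [norm_mul, Complex.norm_I, mul_one, Complex.norm_real, Real.norm_eq_abs, Complex.norm_real, Real.norm_eq_abs]
  set N : ℂ → ℝ × ℝ := fun w =>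
    (((h₂.2:ℝ) * w.re - (h₂.1:ℝ) * w.im)/(d:ℝ), ((h₁.2:ℝ) * w.re - (h₁.1:ℝ) * w.im)/(d:ℝ))
    with hN_def
  have hNc : Continuous N := by
    apply Continuous.prodMk <;>
      exact ((continuous_const.mul Complex.continuous_re).sub
        (continuous_const.mul Complex.continuous_im)).div_const _
  set L : ℝ × ℝ → ℝ × ℝ := fun p =>
    (p.1 * (h₁.1:ℝ) - p.2 * (h₂.1:ℝ), p.1 * (h₁.2:ℝ) - p.2 * (h₂.2:ℝ)) with hL_def
  have hLN : ∀ w : ℂ, L (N w) = (w.re, w.im) := by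
    intro w
    rw [hL_def, hN_def]
    simp only [Prod.ext_iff]
    have hd2 : (d:ℝ) = (h₁.1:ℝ) * (h₂.2:ℝ) - (h₁.2:ℝ) * (h₂.1:ℝ) := by
      rw [hd_def]; push_cast; ring
    constructor
    · field_simp
      rw [hd2]
      ring
    · field_simp
      rw [hd2]
      ring
  set P : ℝ × ℝ → ℝ × ℝ := fun p => γ₁ p.1 - γ₂ p.2 - L p with hP_def
  have hPc : Continuous P := by
    apply Continuous.sub
    · exact (hc₁.comp continuous_fst).sub (hc₂.comp continuous_snd)
    · rw [hL_def]
      exact Continuous.prodMk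
        ((continuous_fst.mul continuous_const).sub (continuous_snd.mul continuous_const))
        ((continuous_fst.mul continuous_const).sub (continuous_snd.mul continuous_const))
  have hPper : ∀ (m n : ℤ) (s t : ℝ), P (s + m, t + n) = P (s, t) := by
    intro m n s t
    rw [hP_def]
    simp only []
    rw [per_int γ₁ h₁ hper₁ m s, per_int γ₂ h₂ hper₂ n t]
    rw [hL_def]
    simp only [intVec, Prod.ext_iff, Prod.fst_sub, Prod.snd_sub, Prod.fst_add, Prod.snd_add]
    constructor <;> (push_cast; ring)
  obtain ⟨C, hC⟩ := (IsCompact.prod (isCompact_Icc (a:=(0:ℝ)) (b:=1))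
    (isCompact_Icc (a:=(0:ℝ)) (b:=1))).exists_bound_of_continuousOn hPc.continuousOn
  have hPbd : ∀ p : ℝ × ℝ, ‖P p‖ ≤ C := by
    intro p
    have h1 : P p = P (Int.fract p.1, Int.fract p.2) := by
      have e1 : p.1 = Int.fract p.1 + (⌊p.1⌋ : ℤ) := by rw [add_comm]; exact (Int.floor_add_fract p.1).symm
      have e2 : p.2 = Int.fract p.2 + (⌊p.2⌋ : ℤ) := by rw [add_comm]; exact (Int.floor_add_fract p.2).symm
      calc P p = P (Int.fract p.1 + (⌊p.1⌋ : ℤ), Int.fract p.2 + (⌊p.2⌋ : ℤ)) := by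
            rw [← e1, ← e2]
        _ = P (Int.fract p.1, Int.fract p.2) := hPper _ _ _ _
    rw [h1]
    apply hC
    constructor
    · exact ⟨Int.fract_nonneg _, (Int.fract_lt_one _).le⟩
    · exact ⟨Int.fract_nonneg _, (Int.fract_lt_one _).le⟩
  set Q : ℂ → ℂ := fun w => K (P (N w)) with hQ_def
  have hQc : Continuous Q := by
    apply Continuous.add
    · exact Complex.continuous_ofReal.comp (continuous_fst.comp (hPc.comp hNc))
    · exact (Complex.continuous_ofReal.comp (continuous_snd.comp (hPc.comp hNc))).mul
        continuous_const
  have hQbd : ∀ w, ‖Q w‖ ≤ 2 * |C| + 2 := by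
    intro w
    calc ‖Q w‖ ≤ |(P (N w)).1| + |(P (N w)).2| := hKabs _
      _ ≤ ‖P (N w)‖ + ‖P (N w)‖ := by
          have a1 : |(P (N w)).1| ≤ ‖P (N w)‖ := (Real.norm_eq_abs _) ▸ norm_fst_le (P (N w))
          have a2 : |(P (N w)).2| ≤ ‖P (N w)‖ := (Real.norm_eq_abs _) ▸ norm_snd_le (P (N w))
          linarith
      _ ≤ 2 * |C| + 2 := by
          have := hPbd (N w)
          have h2 : (C:ℝ) ≤ |C| := le_abs_self C
          linarith
  obtain ⟨w₀, hw₀⟩ := surj_of_bounded Q hQc (2*|C|+2) (by positivity) hQbd (K (intVec v))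
  simp only [] at hw₀
  refine ⟨(N w₀).1, (N w₀).2, ?_⟩
  have hKL : K (L (N w₀)) = w₀ := by
    rw [hLN w₀, hK_def]
    simp only []
    exact Complex.re_add_im w₀
  have key : K (γ₁ (N w₀).1 - γ₂ (N w₀).2) = K (intVec v) := by
    have h1 : γ₁ (N w₀).1 - γ₂ (N w₀).2 = P (N w₀) + L (N w₀) := by
      rw [hP_def]
      simp only []
      abel
    rw [h1, hKadd, hKL, ← hw₀, hQ_def]
    ring
  have h2 : γ₁ (N w₀).1 - γ₂ (N w₀).2 = intVec v := hKinj key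
  exact sub_eq_iff_eq_add.mp h2 |>.trans (add_comm _ _)

end meet

/-- Corollary 8.2: two closed curves on the torus in primitive homology
classes `h₁, h₂` with `h₁ · h₂ ≠ 0`, whose lifts pairwise intersect at most once,
intersect in exactly `|h₁ · h₂|` points. -/
theorem torus_curves_intersection_card (h₁ h₂ : ℤ × ℤ)
    (hprim₁ : IsCoprime h₁.1 h₁.2) (hprim₂ : IsCoprime h₂.1 h₂.2)
    (hint : h₁.1 * h₂.2 - h₁.2 * h₂.1 ≠ 0)
    (γ₁ γ₂ : ℝ → ℝ × ℝ)
    (hc₁ : Continuous γ₁) (hc₂ : Continuous γ₂)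
    (hper₁ : ∀ t, γ₁ (t + 1) = γ₁ t + intVec h₁)
    (hper₂ : ∀ t, γ₂ (t + 1) = γ₂ t + intVec h₂)
    (hsimple₁ : ∀ s t : ℝ, torusProj (γ₁ s) = torusProj (γ₁ t) → ∃ m : ℤ, t = s + m)
    (hsimple₂ : ∀ s t : ℝ, torusProj (γ₂ s) = torusProj (γ₂ t) → ∃ m : ℤ, t = s + m)
    (honce : ∀ v : ℤ × ℤ,
      (Set.range γ₁ ∩ ((fun x => x + intVec v) '' Set.range γ₂)).Subsingleton) :
    ((torusProj '' Set.range γ₁) ∩ (torusProj '' Set.range γ₂)).ncard =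
      (h₁.1 * h₂.2 - h₁.2 * h₂.1).natAbs := by
  classical
  set d : ℤ := h₁.1 * h₂.2 - h₁.2 * h₂.1 with hd_def
  set n : ℕ := d.natAbs with hn_def
  haveI : NeZero n := ⟨Int.natAbs_ne_zero.mpr hint⟩
  obtain ⟨p, q, hpq⟩ := hprim₁
  choose S T hST using exists_meet h₁ h₂ hint γ₁ γ₂ hc₁ hc₂ hper₁ hper₂
  set G : ℤ × ℤ → AddCircle (1:ℝ) × AddCircle (1:ℝ) := fun v => torusProj (γ₁ (S v)) with hG_def
  set β : ℤ × ℤ → ℤ := fun v => h₁.1 * v.2 - h₁.2 * v.1 with hβ_def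
  have hd0 : ((d:ℤ) : ZMod n) = 0 := by
    rw [ZMod.intCast_zmod_eq_zero_iff_dvd]
    exact Int.natAbs_dvd.mpr dvd_rfl
  have hval : ∀ c : ZMod n, ((c.val : ℤ) : ZMod n) = c := by
    intro c
    rw [Int.cast_natCast]
    exact (ZMod.natCast_val c).trans (ZMod.cast_id n c)
  -- forward: equal torus points force congruent classes
  have forward : ∀ v v' : ℤ × ℤ, G v = G v' → ((β v : ZMod n) = (β v' : ZMod n)) := by
    intro v v' hGG
    obtain ⟨m, hm⟩ := hsimple₁ (S v) (S v') hGG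
    have e1 : γ₁ (S v') = γ₁ (S v) + intVec (m * h₁.1, m * h₁.2) := by
      rw [hm]; exact per_int γ₁ h₁ hper₁ m (S v)
    set w : ℤ × ℤ := (v.1 + m * h₁.1 - v'.1, v.2 + m * h₁.2 - v'.2) with hw_def
    have e2 : γ₂ (T v') = γ₂ (T v) + intVec w := by
      have e := hST v'
      rw [e1, hST v] at e
      -- e : γ₂ (T v) + intVec v + intVec (m h₁) = γ₂ (T v') + intVec v'
      have e' : γ₂ (T v') = γ₂ (T v) + intVec v + intVec (m * h₁.1, m * h₁.2) - intVec v' :=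
        eq_sub_of_add_eq e.symm
      rw [e']
      simp only [intVec, hw_def, Prod.ext_iff, Prod.fst_add, Prod.snd_add, Prod.fst_sub, Prod.snd_sub]
      constructor <;> (push_cast; ring)
    have hproj : torusProj (γ₂ (T v)) = torusProj (γ₂ (T v')) := by
      rw [e2]; exact (torusProj_add_intVec _ _).symm
    obtain ⟨m', hm'⟩ := hsimple₂ (T v) (T v') hproj
    have e3 : γ₂ (T v') = γ₂ (T v) + intVec (m' * h₂.1, m' * h₂.2) := by
      rw [hm']; exact per_int γ₂ h₂ hper₂ m' (T v)
    have e4 : intVec (m' * h₂.1, m' * h₂.2) = intVec w := add_left_cancel (e3.symm.trans e2)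
    have h5 : m' * h₂.1 = w.1 := by
      have := congrArg Prod.fst e4
      simp only [intVec] at this
      exact_mod_cast this
    have h6 : m' * h₂.2 = w.2 := by
      have := congrArg Prod.snd e4
      simp only [intVec] at this
      exact_mod_cast this
    rw [hw_def] at h5 h6
    simp only [] at h5 h6
    have e6 : β v' = β v - m' * d := by
      rw [hβ_def, hd_def]
      simp only []
      linear_combination h₁.1 * h6 - h₁.2 * h5
    rw [e6]
    push_cast
    rw [hd0]
    ring
  -- backward: congruent classes force equal torus points
  have backward : ∀ v v' : ℤ × ℤ, ((β v : ZMod n) = (β v' : ZMod n)) → G v = G v' := by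
    intro v v' hβeq
    have hdvd : (n:ℤ) ∣ (β v' - β v) := by
      rw [ZMod.intCast_eq_intCast_iff] at hβeq
      exact hβeq.dvd
    have hdvd' : d ∣ (β v' - β v) := Int.natAbs_dvd.mp hdvd
    obtain ⟨k, hk⟩ := hdvd'
    set w : ℤ × ℤ := (v'.1 - v.1 - k * h₂.1, v'.2 - v.2 - k * h₂.2) with hw_def
    have hβw : h₁.1 * w.2 - h₁.2 * w.1 = 0 := by
      rw [hw_def]
      simp only []
      rw [hβ_def] at hk
      simp only [] at hk
      rw [hd_def] at hk
      linear_combination hk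
    set α : ℤ := p * w.1 + q * w.2 with hα_def
    have hw1 : w.1 = α * h₁.1 := by
      rw [hα_def]
      linear_combination (-w.1) * hpq - q * hβw
    have hw2 : w.2 = α * h₁.2 := by
      rw [hα_def]
      linear_combination (-w.2) * hpq + p * hβw
    have i1 : v'.1 + (-α) * h₁.1 = k * h₂.1 + v.1 := by
      rw [hw_def] at hw1
      simp only [] at hw1
      linear_combination hw1
    have i2 : v'.2 + (-α) * h₁.2 = k * h₂.2 + v.2 := by
      rw [hw_def] at hw2
      simp only [] at hw2
      linear_combination hw2
    have e1 : γ₁ (S v' + ((-α : ℤ) : ℝ)) = γ₂ (T v' + (k : ℝ)) + intVec v := by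
      rw [per_int γ₁ h₁ hper₁ (-α) (S v')]
      have : γ₂ (T v' + ((k : ℤ) : ℝ)) = γ₂ (T v') + intVec (k * h₂.1, k * h₂.2) :=
        per_int γ₂ h₂ hper₂ k (T v')
      push_cast at this ⊢
      rw [this, hST v']
      rw [add_assoc, add_assoc]
      congr 1
      simp only [intVec, Prod.ext_iff, Prod.fst_add, Prod.snd_add]
      constructor
      · push_cast; exact_mod_cast congrArg (fun z : ℤ => (z : ℝ)) i1
      · push_cast; exact_mod_cast congrArg (fun z : ℤ => (z : ℝ)) i2
    have heq : γ₁ (S v' + ((-α : ℤ) : ℝ)) = γ₁ (S v) := by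
      apply honce v
      · exact ⟨⟨S v' + ((-α : ℤ) : ℝ), rfl⟩, ⟨γ₂ (T v' + (k : ℝ)), ⟨T v' + (k : ℝ), rfl⟩, e1.symm⟩⟩
      · exact ⟨⟨S v, rfl⟩, ⟨γ₂ (T v), ⟨T v, rfl⟩, (hST v).symm⟩⟩
    have e2 : γ₁ (S v' + ((-α : ℤ) : ℝ)) = γ₁ (S v') + intVec ((-α) * h₁.1, (-α) * h₁.2) :=
      per_int γ₁ h₁ hper₁ (-α) (S v')
    rw [hG_def]
    simp only []
    calc torusProj (γ₁ (S v)) = torusProj (γ₁ (S v' + ((-α : ℤ) : ℝ))) := by rw [heq]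
      _ = torusProj (γ₁ (S v')) := by rw [e2]; exact torusProj_add_intVec _ _
  -- the parametrization of intersection points by ZMod n
  set rep : ZMod n → ℤ × ℤ := fun c => (-(q * (c.val : ℤ)), p * (c.val : ℤ)) with hrep_def
  have hβrep : ∀ c : ZMod n, β (rep c) = (c.val : ℤ) := by
    intro c
    rw [hβ_def, hrep_def]
    simp only []
    linear_combination (c.val : ℤ) * hpq
  set F : ZMod n → AddCircle (1:ℝ) × AddCircle (1:ℝ) := fun c => G (rep c) with hF_def
  have hseteq : (torusProj '' Set.range γ₁) ∩ (torusProj '' Set.range γ₂) = Set.range F := by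
    ext x
    constructor
    · rintro ⟨⟨y, ⟨a, rfl⟩, rfl⟩, ⟨z, ⟨b, rfl⟩, hbx⟩⟩
      obtain ⟨v, hv⟩ := torusProj_eq_iff.mp hbx.symm
      have hxa : γ₁ a = γ₁ (S v) := by
        apply honce v
        · exact ⟨⟨a, rfl⟩, ⟨γ₂ b, ⟨b, rfl⟩, hv.symm⟩⟩
        · exact ⟨⟨S v, rfl⟩, ⟨γ₂ (T v), ⟨T v, rfl⟩, (hST v).symm⟩⟩
      refine ⟨((β v : ℤ) : ZMod n), ?_⟩
      have hc : ((β (rep ((β v : ℤ) : ZMod n)) : ℤ) : ZMod n) = ((β v : ℤ) : ZMod n) := by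
        rw [hβrep]
        exact hval _
      rw [hF_def]
      simp only []
      rw [backward _ _ hc]
      rw [hG_def]
      simp only []
      rw [hxa]
    · rintro ⟨c, rfl⟩
      constructor
      · exact ⟨γ₁ (S (rep c)), ⟨S (rep c), rfl⟩, rfl⟩
      · refine ⟨γ₂ (T (rep c)), ⟨T (rep c), rfl⟩, ?_⟩
        show torusProj (γ₂ (T (rep c))) = F c
        rw [hF_def, hG_def]
        simp only []
        rw [hST (rep c)]
        exact (torusProj_add_intVec _ _).symm
  have hinj : Function.Injective F := by
    intro c c' hcc
    have := forward _ _ hcc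
    rw [hβrep, hβrep, hval, hval] at this
    exact this
  rw [hseteq, ← Nat.card_coe_set_eq, Nat.card_range_of_injective hinj, Nat.card_zmod]
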